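/- (Lemma 1, flow form.) Suppose (A1), (A2) and (A3) hold. Let θ : [t₀, ∞) → ℝⁿ be differentiable with θ′(t) = F(θ(t)) for all t ≥ t₀ and θ(t₀) ∈ C. Then θ(t) ∈ C for all t ≥ t₀, the function t ↦ J(θ(t)) is nonincreasing and is strictly decreasing on every interval on which θ(t) ≠ θ*_c, and if the trajectory {θ(t) : t ≥ t₀} is bounded then θ(t) → θ*_c as t → ∞. -/

import Mathlib

open scoped RealInnerProductSpace
open Set Filter

open Classical in
/-- The safe-gradient-flow vector field `F`. -/
noncomputable def Fvec {n : ℕ} (J h : EuclideanSpace ℝ (Fin n) → ℝ) (c : ℝ)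
    (θ : EuclideanSpace ℝ (Fin n)) : EuclideanSpace ℝ (Fin n) :=
  if gradient h θ = 0 then -gradient J θ
  else -gradient J θ +
    (max (⟪gradient J θ, gradient h θ⟫ - c * h θ) 0 / ‖gradient h θ‖ ^ 2) • gradient h θ

section aux

variable {n : ℕ} {J h : EuclideanSpace ℝ (Fin n) → ℝ} {c : ℝ}

lemma fvec_eq_of_ne (x : EuclideanSpace ℝ (Fin n)) (hx : gradient h x ≠ 0) :
    Fvec J h c x = -gradient J x +
      (max (⟪gradient J x, gradient h x⟫ - c * h x) 0 / ‖gradient h x‖ ^ 2) • gradient h x := by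
  simp [Fvec, hx]

lemma fvec_eq_of_nonpos (x : EuclideanSpace ℝ (Fin n))
    (hx : ⟪gradient J x, gradient h x⟫ - c * h x ≤ 0) :
    Fvec J h c x = -gradient J x := by
  unfold Fvec
  split
  · rfl
  · rw [max_eq_right hx, zero_div, zero_smul, add_zero]

end aux

set_option maxHeartbeats 1000000 in
/-- Lemma 1, flow form: under (A1)–(A3), any solution of θ' = F(θ) starting
in the safe set C stays in C, J(θ(t)) is nonincreasing and strictly decreasing on every
interval avoiding θ*_c, and bounded trajectories converge to θ*_c. -/
theorem stmt6 {n : ℕ} (hn : 1 ≤ n) (J h : EuclideanSpace ℝ (Fin n) → ℝ) (c : ℝ) (hc : 0 < c)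
    (θc : EuclideanSpace ℝ (Fin n))
    (hJ : ContDiff ℝ 1 J) (hJ' : LocallyLipschitz (gradient J))
    (hh : ContDiff ℝ 1 h) (hh' : LocallyLipschitz (gradient h))
    (hA1 : 0 ≤ h θc ∧ (∀ θ, 0 ≤ h θ → θ ≠ θc → J θc < J θ) ∧
      (∀ θ, 0 ≤ h θ → gradient J θ = 0 → θ = θc))
    (hA2 : (∃ θ, 0 ≤ h θ) ∧ ∀ ρ ∈ Set.range h, ρ ≤ 0 →
      ∃ L > 0, ∀ θ, h θ ≤ 0 → ρ ≤ h θ → L < ‖gradient h θ‖)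
    (hA3 : ∀ θ, h θ = 0 →
      ⟪gradient h θ, gradient J θ⟫ = ‖gradient h θ‖ * ‖gradient J θ‖ → θ = θc) :
    ∀ (t₀ : ℝ) (θ : ℝ → EuclideanSpace ℝ (Fin n)),
      (∀ t ≥ t₀, HasDerivAt θ (Fvec J h c (θ t)) t) → 0 ≤ h (θ t₀) →
      (∀ t ≥ t₀, 0 ≤ h (θ t)) ∧
      AntitoneOn (fun t => J (θ t)) (Set.Ici t₀) ∧
      (∀ t₁ t₂, t₀ ≤ t₁ → t₁ < t₂ → (∀ t ∈ Set.Icc t₁ t₂, θ t ≠ θc) →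
        J (θ t₂) < J (θ t₁)) ∧
      (Bornology.IsBounded (θ '' Set.Ici t₀) →
        Filter.Tendsto θ Filter.atTop (nhds θc)) := by
  obtain ⟨hA1a, hA1b, hA1c⟩ := hA1
  obtain ⟨hA2a, hA2b⟩ := hA2
  have cgJ : Continuous (gradient J) := hJ'.continuous
  have cgh : Continuous (gradient h) := hh'.continuous
  have cJ : Continuous J := hJ.continuous
  have chh : Continuous h := hh.continuous
  -- gradient of h is nonzero on the unsafe region
  have hgh_ne : ∀ x, h x ≤ 0 → gradient h x ≠ 0 := by
    intro x hx h0
    obtain ⟨L, hL, hL2⟩ := hA2b (h x) ⟨x, rfl⟩ hx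
    have := hL2 x hx le_rfl
    rw [h0, norm_zero] at this
    linarith
  -- derivative of h along the flow is nonnegative in the unsafe region
  have key_h : ∀ x, h x ≤ 0 → 0 ≤ ⟪gradient h x, Fvec J h c x⟫ := by
    intro x hx
    have hne := hgh_ne x hx
    rw [fvec_eq_of_ne x hne, inner_add_right, inner_neg_right, real_inner_smul_right,
      real_inner_self_eq_norm_sq]
    have hbpos : (0:ℝ) < ‖gradient h x‖ := norm_pos_iff.mpr hne
    have hb2 : (0:ℝ) < ‖gradient h x‖ ^ 2 := by positivity
    rw [div_mul_cancel₀ _ (ne_of_gt hb2)]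
    have hcomm : ⟪gradient h x, gradient J x⟫ = ⟪gradient J x, gradient h x⟫ :=
      real_inner_comm _ _
    have hmax : ⟪gradient J x, gradient h x⟫ - c * h x ≤
        max (⟪gradient J x, gradient h x⟫ - c * h x) 0 := le_max_left _ _
    have : 0 ≤ -(c * h x) := by nlinarith
    linarith [hcomm]
  -- derivative of J along the flow is nonpositive in the safe region
  have key_Jle : ∀ x, 0 ≤ h x → ⟪gradient J x, Fvec J h c x⟫ ≤ 0 := by
    intro x hx
    by_cases hne : gradient h x = 0
    · rw [show Fvec J h c x = -gradient J x by simp [Fvec, hne], inner_neg_right,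
        real_inner_self_eq_norm_sq]
      exact neg_nonpos.mpr (sq_nonneg _)
    · rw [fvec_eq_of_ne x hne, inner_add_right, inner_neg_right, real_inner_smul_right,
        real_inner_self_eq_norm_sq]
      set s := ⟪gradient J x, gradient h x⟫ with hs
      set a := ‖gradient J x‖
      set b := ‖gradient h x‖
      have hb : (0:ℝ) < b := norm_pos_iff.mpr hne
      have hcs : s ≤ a * b := real_inner_le_norm _ _
      rcases le_or_gt (s - c * h x) 0 with h1 | h1
      · rw [max_eq_right h1]
        simp only [zero_div, zero_mul, add_zero, neg_nonpos]
        positivity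
      · rw [max_eq_left h1.le]
        have hch : 0 ≤ c * h x := mul_nonneg hc.le hx
        have hsx : 0 < s := by nlinarith
        have key : (s - c * h x) * s ≤ a ^ 2 * b ^ 2 := by
          nlinarith [mul_le_mul hcs hcs hsx.le (le_trans hsx.le hcs)]
        have h2 : (s - c * h x) / b ^ 2 * s ≤ a ^ 2 := by
          rw [div_mul_eq_mul_div, div_le_iff₀ (by positivity : (0:ℝ) < b ^ 2)]
          nlinarith
        linarith
  -- derivative of J along the flow is strictly negative away from θc
  have key_Jlt : ∀ x, 0 ≤ h x → x ≠ θc → ⟪gradient J x, Fvec J h c x⟫ < 0 := by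
    intro x hx hxc
    have hgJ : gradient J x ≠ 0 := fun h0 => hxc (hA1c x hx h0)
    have ha : (0:ℝ) < ‖gradient J x‖ := norm_pos_iff.mpr hgJ
    by_cases hne : gradient h x = 0
    · rw [show Fvec J h c x = -gradient J x by simp [Fvec, hne], inner_neg_right,
        real_inner_self_eq_norm_sq]
      nlinarith
    · rw [fvec_eq_of_ne x hne, inner_add_right, inner_neg_right, real_inner_smul_right,
        real_inner_self_eq_norm_sq]
      set s := ⟪gradient J x, gradient h x⟫ with hs
      set a := ‖gradient J x‖ with hadef
      set b := ‖gradient h x‖ with hbdef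
      have hb : (0:ℝ) < b := norm_pos_iff.mpr hne
      have hcs : s ≤ a * b := real_inner_le_norm _ _
      rcases le_or_gt (s - c * h x) 0 with h1 | h1
      · rw [max_eq_right h1]
        simp only [zero_div, zero_mul, add_zero]
        nlinarith
      · rw [max_eq_left h1.le]
        have hch : 0 ≤ c * h x := mul_nonneg hc.le hx
        have hsx : 0 < s := by nlinarith
        have key : (s - c * h x) * s < a ^ 2 * b ^ 2 := by
          rcases lt_or_eq_of_le hcs with h2 | h2
          · nlinarith [mul_lt_mul_of_pos_left h2 hsx, mul_le_mul_of_nonneg_right h2.le hsx.le]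
          · -- equality in Cauchy–Schwarz: then h x > 0 by (A3)
            have hx0 : h x ≠ 0 := by
              intro he
              apply hxc
              apply hA3 x he
              rw [real_inner_comm, ← hs, h2, hadef, hbdef]
              ring
            have hxpos : 0 < h x := lt_of_le_of_ne hx (Ne.symm hx0)
            have : s - c * h x < s := by nlinarith
            nlinarith
        have h2 : (s - c * h x) / b ^ 2 * s < a ^ 2 := by
          rw [div_mul_eq_mul_div, div_lt_iff₀ (by positivity : (0:ℝ) < b ^ 2)]
          nlinarith
        linarith
  -- continuity of the vector field on the safe set
  have key_cont : ∀ x, 0 ≤ h x → ContinuousAt (Fvec J h c) x := by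
    intro x hx
    by_cases hne : gradient h x = 0
    · have hxpos : 0 < h x := by
        rcases lt_or_eq_of_le hx with h1 | h1
        · exact h1
        · exact absurd hne (hgh_ne x h1.symm.le)
      have hev : ∀ᶠ y in nhds x, ⟪gradient J y, gradient h y⟫ - c * h y < 0 := by
        have hcont : Continuous fun y => ⟪gradient J y, gradient h y⟫ - c * h y :=
          (cgJ.inner cgh).sub (continuous_const.mul chh)
        have hval : ⟪gradient J x, gradient h x⟫ - c * h x < 0 := by
          rw [hne, inner_zero_right]
          nlinarith
        exact hcont.continuousAt.eventually_lt continuousAt_const hval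
      have heq : (fun y => -gradient J y) =ᶠ[nhds x] Fvec J h c :=
        hev.mono fun y hy => (fvec_eq_of_nonpos y hy.le).symm
      exact ContinuousAt.congr (cgJ.neg.continuousAt) heq
    · have hev : ∀ᶠ y in nhds x, gradient h y ≠ 0 := by
        have : IsOpen {y : EuclideanSpace ℝ (Fin n) | gradient h y ≠ 0} :=
          isOpen_compl_iff.mpr (isClosed_singleton.preimage cgh)
        exact this.mem_nhds hne
      have heq : (fun y => -gradient J y +
          (max (⟪gradient J y, gradient h y⟫ - c * h y) 0 / ‖gradient h y‖ ^ 2) •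
            gradient h y) =ᶠ[nhds x] Fvec J h c :=
        hev.mono fun y hy => (fvec_eq_of_ne y hy).symm
      refine ContinuousAt.congr ?_ heq
      refine ContinuousAt.add cgJ.neg.continuousAt (ContinuousAt.fun_smul ?_ cgh.continuousAt)
      refine ContinuousAt.div ?_ ?_ ?_
      · exact (((cgJ.inner cgh).sub (continuous_const.mul chh)).max continuous_const).continuousAt
      · exact ((cgh.norm.pow 2)).continuousAt
      · have : (0:ℝ) < ‖gradient h x‖ := norm_pos_iff.mpr hne
        positivity
  intro t₀ θ hθ h0
  -- chain rules
  have hJθ : ∀ t ≥ t₀, HasDerivAt (fun t => J (θ t))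
      ⟪gradient J (θ t), Fvec J h c (θ t)⟫ t := by
    intro t ht
    have hgrad := ((hJ.differentiable one_ne_zero) (θ t)).hasGradientAt.hasFDerivAt
    have := hgrad.comp_hasDerivAt t (hθ t ht)
    rw [InnerProductSpace.toDual_apply_apply] at this
    exact this
  have hhθ : ∀ t ≥ t₀, HasDerivAt (fun t => h (θ t))
      ⟪gradient h (θ t), Fvec J h c (θ t)⟫ t := by
    intro t ht
    have hgrad := ((hh.differentiable one_ne_zero) (θ t)).hasGradientAt.hasFDerivAt
    have := hgrad.comp_hasDerivAt t (hθ t ht)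
    rw [InnerProductSpace.toDual_apply_apply] at this
    exact this
  -- Part 1: forward invariance of the safe set
  have part1 : ∀ t ≥ t₀, 0 ≤ h (θ t) := by
    intro t₁ ht₁
    by_contra hneg
    push_neg at hneg
    set φ : ℝ → ℝ := fun t => h (θ t) with hφdef
    have ht01 : t₀ < t₁ := by
      rcases lt_or_eq_of_le ht₁ with h1 | h1
      · exact h1
      · exfalso; rw [← h1] at hneg; exact absurd h0 (not_le.mpr hneg)
    have hφcont : ContinuousOn φ (Icc t₀ t₁) := fun t ht =>
      ((hhθ t ht.1).continuousAt).continuousWithinAt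
    have hz : (0:ℝ) ∈ φ '' Icc t₀ t₁ :=
      intermediate_value_Icc' ht₁ hφcont ⟨hneg.le, h0⟩
    set S := Icc t₀ t₁ ∩ φ ⁻¹' {0} with hSdef
    have hSne : S.Nonempty := by
      obtain ⟨u, hu, hu0⟩ := hz
      exact ⟨u, hu, hu0⟩
    have hSclosed : IsClosed S :=
      hφcont.preimage_isClosed_of_isClosed isClosed_Icc isClosed_singleton
    have hSbdd : BddAbove S := BddAbove.mono (inter_subset_left) bddAbove_Icc
    set s := sSup S with hsdef
    have hsS : s ∈ S := hSclosed.csSup_mem hSne hSbdd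
    have hs0 : φ s = 0 := hsS.2
    have hst₀ : t₀ ≤ s := hsS.1.1
    have hst₁ : s ≤ t₁ := hsS.1.2
    have hslt : s < t₁ := lt_of_le_of_ne hst₁ (fun e => by rw [e] at hs0; linarith)
    have hφle : ∀ u ∈ Icc s t₁, φ u ≤ 0 := by
      intro u hu
      by_contra hpos
      push_neg at hpos
      have hz2 : (0:ℝ) ∈ φ '' Icc u t₁ :=
        intermediate_value_Icc' hu.2
          (hφcont.mono (Icc_subset_Icc (le_trans hst₀ hu.1) le_rfl)) ⟨hneg.le, hpos.le⟩
      obtain ⟨v, hv, hv0⟩ := hz2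
      have hvS : v ∈ S := ⟨⟨le_trans (le_trans hst₀ hu.1) hv.1, hv.2⟩, hv0⟩
      have hvs : v ≤ s := le_csSup hSbdd hvS
      have hsu : s < u := lt_of_le_of_ne hu.1 (fun e => by rw [← e] at hpos; linarith)
      linarith [hv.1]
    have hmono : MonotoneOn φ (Icc s t₁) := by
      apply monotoneOn_of_deriv_nonneg (convex_Icc s t₁)
        (hφcont.mono (Icc_subset_Icc hst₀ le_rfl))
      · intro u hu
        rw [interior_Icc] at hu
        exact ((hhθ u (le_trans hst₀ hu.1.le)).differentiableAt).differentiableWithinAt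
      · intro u hu
        rw [interior_Icc] at hu
        rw [(hhθ u (le_trans hst₀ hu.1.le)).deriv]
        exact key_h (θ u) (hφle u (Ioo_subset_Icc_self hu))
    have := hmono ⟨le_rfl, hslt.le⟩ ⟨hslt.le, le_rfl⟩ hslt.le
    rw [hs0] at this
    exact absurd this (not_le.mpr hneg)
  -- Part 2: J is nonincreasing along the flow
  have part2 : AntitoneOn (fun t => J (θ t)) (Ici t₀) := by
    apply antitoneOn_of_deriv_nonpos (convex_Ici t₀)
    · intro t ht
      exact ((hJθ t ht).continuousAt).continuousWithinAt
    · intro t ht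
      rw [interior_Ici] at ht
      exact (hJθ t ht.le).differentiableAt.differentiableWithinAt
    · intro t ht
      rw [interior_Ici] at ht
      rw [(hJθ t ht.le).deriv]
      exact key_Jle _ (part1 t ht.le)
  refine ⟨part1, part2, ?_, ?_⟩
  · -- strict decrease on intervals avoiding θc
    intro t₁ t₂ h1 h12 havoid
    have hstrict : StrictAntiOn (fun t => J (θ t)) (Icc t₁ t₂) := by
      apply strictAntiOn_of_deriv_neg (convex_Icc t₁ t₂)
      · intro t ht
        exact ((hJθ t (le_trans h1 ht.1)).continuousAt).continuousWithinAt
      · intro t ht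
        rw [interior_Icc] at ht
        have ht' : t₀ ≤ t := le_trans h1 ht.1.le
        rw [(hJθ t ht').deriv]
        exact key_Jlt _ (part1 t ht') (havoid t (Ioo_subset_Icc_self ht))
    exact hstrict ⟨le_rfl, h12.le⟩ ⟨h12.le, le_rfl⟩ h12
  · -- convergence of bounded trajectories
    intro hb
    set K₀ := closure (θ '' Ici t₀) with hK₀def
    have hK₀c : IsCompact K₀ := hb.isCompact_closure
    have himg : θ '' Ici t₀ ⊆ {x | 0 ≤ h x} := by
      rintro _ ⟨t, ht, rfl⟩
      exact part1 t ht
    have hK₀C : K₀ ⊆ {x | 0 ≤ h x} :=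
      closure_minimal himg (isClosed_le continuous_const chh)
    have hmem : ∀ t ≥ t₀, θ t ∈ K₀ := fun t ht => subset_closure ⟨t, ht, rfl⟩
    have hK₀ne : K₀.Nonempty := ⟨θ t₀, hmem t₀ le_rfl⟩
    -- bound on the vector field
    have hFcont : ContinuousOn (Fvec J h c) K₀ := fun x hx =>
      (key_cont x (hK₀C hx)).continuousWithinAt
    obtain ⟨M₀, hM₀⟩ := hK₀c.exists_bound_of_continuousOn hFcont
    set M := max M₀ 1 with hMdef
    have hM1 : (0:ℝ) < M := lt_of_lt_of_le one_pos (le_max_right _ _)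
    have hMb : ∀ x ∈ K₀, ‖Fvec J h c x‖ ≤ M := fun x hx =>
      (hM₀ x hx).trans (le_max_left _ _)
    -- the trajectory is M-Lipschitz
    have hlip : ∀ t₁ t₂, t₀ ≤ t₁ → t₁ ≤ t₂ → ‖θ t₂ - θ t₁‖ ≤ M * (t₂ - t₁) := by
      intro t₁ t₂ h1 h2
      have key := (convex_Icc t₁ t₂).norm_image_sub_le_of_norm_hasDerivWithin_le
        (f := θ) (f' := fun t => Fvec J h c (θ t))
        (fun u hu => (hθ u (le_trans h1 hu.1)).hasDerivWithinAt)
        (fun u hu => hMb _ (hmem u (le_trans h1 hu.1))) ⟨le_rfl, h2⟩ ⟨h2, le_rfl⟩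
      calc ‖θ t₂ - θ t₁‖ ≤ M * ‖t₂ - t₁‖ := key
        _ = M * (t₂ - t₁) := by rw [Real.norm_eq_abs, abs_of_nonneg (by linarith)]
    -- J is bounded below on the trajectory
    obtain ⟨xm, hxm, hxmin⟩ := hK₀c.exists_isMinOn hK₀ne cJ.continuousOn
    set B := J xm with hBdef
    have hBlb : ∀ t ≥ t₀, B ≤ J (θ t) := fun t ht => hxmin (hmem t ht)
    -- suppose the trajectory does not converge
    rw [Metric.tendsto_atTop]
    by_contra hnot
    push_neg at hnot
    obtain ⟨ε, hε, hfreq⟩ := hnot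
    -- compact set away from θc where the decrease rate is uniform
    set K := K₀ ∩ {x | ε / 2 ≤ dist x θc} with hKdef
    have hKc : IsCompact K := hK₀c.inter_right
      (isClosed_le continuous_const (continuous_id.dist continuous_const))
    have hKne : K.Nonempty := by
      obtain ⟨t, htT, htd⟩ := hfreq t₀
      exact ⟨θ t, hmem t htT, by simp only [mem_setOf_eq]; linarith⟩
    have hWcont : ContinuousOn (fun x => ⟪gradient J x, Fvec J h c x⟫) K := fun x hx =>
      ((cgJ.continuousAt).inner (key_cont x (hK₀C hx.1))).continuousWithinAt
    obtain ⟨z, hzK, hzmax⟩ := hKc.exists_isMaxOn hKne hWcont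
    set δ := -⟪gradient J z, Fvec J h c z⟫ with hδdef
    have hδpos : 0 < δ := by
      have hzC : 0 ≤ h z := hK₀C hzK.1
      have hzne : z ≠ θc := by
        intro e
        have := hzK.2
        rw [e] at this
        simp only [mem_setOf_eq, dist_self] at this
        linarith
      have := key_Jlt z hzC hzne
      rw [hδdef]
      linarith
    have hWK : ∀ x ∈ K, ⟪gradient J x, Fvec J h c x⟫ ≤ -δ := by
      intro x hx
      have := hzmax hx
      simp only [mem_setOf_eq] at this
      rw [hδdef]
      linarith
    set Δ := ε / (2 * M) with hΔdef
    have hΔpos : 0 < Δ := div_pos hε (by linarith)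
    have hMΔ : M * Δ = ε / 2 := by
      rw [hΔdef]
      field_simp
    -- uniform decrease over time Δ after visiting the far region
    have hdrop : ∀ t ≥ t₀, ε ≤ dist (θ t) θc → J (θ (t + Δ)) ≤ J (θ t) - δ * Δ := by
      intro t ht htd
      have hball : ∀ u ∈ Icc t (t + Δ), θ u ∈ K := by
        intro u hu
        refine ⟨hmem u (le_trans ht hu.1), ?_⟩
        have h1 : ‖θ u - θ t‖ ≤ M * (u - t) := hlip t u ht hu.1
        have h2 : M * (u - t) ≤ M * Δ := by nlinarith [hu.2]
        have h4 : dist (θ t) θc ≤ dist (θ t) (θ u) + dist (θ u) θc := dist_triangle _ _ _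
        have h5 : dist (θ t) (θ u) = ‖θ u - θ t‖ := by rw [dist_eq_norm, norm_sub_rev]
        simp only [mem_setOf_eq]
        linarith
      have hg : AntitoneOn (fun u => J (θ u) + δ * u) (Icc t (t + Δ)) := by
        have hd : ∀ u ∈ Icc t (t + Δ), HasDerivAt (fun u => J (θ u) + δ * u)
            (⟪gradient J (θ u), Fvec J h c (θ u)⟫ + δ) u := by
          intro u hu
          have := (hJθ u (le_trans ht hu.1)).add ((hasDerivAt_id u).const_mul δ)
          simp only [mul_one] at this
          exact this
        apply antitoneOn_of_deriv_nonpos (convex_Icc _ _)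
        · intro u hu
          exact ((hd u hu).continuousAt).continuousWithinAt
        · intro u hu
          rw [interior_Icc] at hu
          exact (hd u (Ioo_subset_Icc_self hu)).differentiableAt.differentiableWithinAt
        · intro u hu
          rw [interior_Icc] at hu
          rw [(hd u (Ioo_subset_Icc_self hu)).deriv]
          have := hWK (θ u) (hball u (Ioo_subset_Icc_self hu))
          linarith
      have hab := hg ⟨le_rfl, by linarith⟩ ⟨by linarith, le_rfl⟩ (by linarith)
      simp only at hab
      have hexp : δ * (t + Δ) = δ * t + δ * Δ := by ring
      linarith
    -- construct a sequence of well-separated far visits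
    choose g hg1 hg2 using hfreq
    set T : ℕ → ℝ := fun k => Nat.rec (g t₀) (fun _ p => g (p + Δ)) k with hTdef
    have hTsucc : ∀ k, T (k + 1) = g (T k + Δ) := fun k => rfl
    have hT0 : ∀ k, t₀ ≤ T k ∧ ε ≤ dist (θ (T k)) θc := by
      intro k
      induction k with
      | zero => exact ⟨hg1 t₀, hg2 t₀⟩
      | succ k ih =>
        constructor
        · have h1 := hg1 (T k + Δ)
          rw [hTsucc]
          linarith [ih.1]
        · rw [hTsucc]
          exact hg2 (T k + Δ)
    have hTstep : ∀ k, J (θ (T (k + 1))) ≤ J (θ (T k)) - δ * Δ := by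
      intro k
      have h1 := hdrop (T k) (hT0 k).1 (hT0 k).2
      have h2 : T k + Δ ≤ T (k + 1) := by rw [hTsucc]; exact hg1 (T k + Δ)
      have h3 : J (θ (T (k + 1))) ≤ J (θ (T k + Δ)) := by
        have ht1 : T k + Δ ∈ Ici t₀ := by
          simp only [mem_Ici]
          linarith [(hT0 k).1]
        have ht2 : T (k + 1) ∈ Ici t₀ := (hT0 (k + 1)).1
        exact part2 ht1 ht2 h2
      linarith
    have hTk : ∀ k : ℕ, J (θ (T k)) ≤ J (θ (T 0)) - k * (δ * Δ) := by
      intro k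
      induction k with
      | zero => simp
      | succ k ih =>
        have := hTstep k
        push_cast
        push_cast at ih
        linarith
    obtain ⟨k, hk⟩ := exists_nat_gt ((J (θ (T 0)) - B) / (δ * Δ))
    have hlb := hBlb (T k) (hT0 k).1
    have hub := hTk k
    have hpos : (0:ℝ) < δ * Δ := mul_pos hδpos hΔpos
    rw [div_lt_iff₀ hpos] at hk
    linarith
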